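/- Let n be a positive integer and work with n×n complex matrices acting on EuclideanSpace ℂ (Fin n). Let Ψ be a unit vector, let P = |Ψ⟩⟨Ψ| be the rank-one orthogonal projection onto the span of Ψ, and let λ₀ ≥ Δ > 0 and δ ≥ 0 be real numbers. Let M be a Hermitian matrix with M ⪯ λ₀·P + (λ₀ − Δ)·(I − P) in the Loewner order, and let Q be a Hermitian matrix with 0 ⪯ Q ⪯ I. If φ is a unit vector with Re⟨φ, Q M Q φ⟩ ≥ λ₀ − δ, then |⟨Ψ, Q φ⟩|² ≥ (Δ − δ)/Δ. -/

import Mathlib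

open scoped ComplexOrder
open Matrix

/-- Loewner order for complex matrices: `A ⪯ B` iff `B − A` is positive semidefinite. -/
def Matrix.loewnerLE {n : ℕ} (A B : Matrix (Fin n) (Fin n) ℂ) : Prop :=
  (B - A).PosSemidef

/-- If `M ⪯ λ₀ |Ψ⟩⟨Ψ| + (λ₀−Δ)(I − |Ψ⟩⟨Ψ|)` and `0 ⪯ Q ⪯ I`, then any unit vector `φ`
with `Re⟨φ, QMQ φ⟩ ≥ λ₀ − δ` satisfies `|⟨Ψ, Qφ⟩|² ≥ (Δ−δ)/Δ`. -/
theorem near_top_eigenvector_overlap (n : ℕ) (hn : 0 < n)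
    (Ψ : EuclideanSpace ℂ (Fin n)) (hΨ : ‖Ψ‖ = 1)
    (P M Q : Matrix (Fin n) (Fin n) ℂ)
    (hP : P = Matrix.of fun i j => Ψ i * starRingEnd ℂ (Ψ j))
    (lam0 Δ δ : ℝ) (hΔ : 0 < Δ) (hlam : Δ ≤ lam0) (hδ : 0 ≤ δ)
    (hM : M.IsHermitian)
    (hMle : Matrix.loewnerLE M ((lam0 : ℂ) • P + ((lam0 : ℂ) - (Δ : ℂ)) • (1 - P)))
    (hQ : Q.IsHermitian) (hQ0 : Matrix.loewnerLE 0 Q) (hQ1 : Matrix.loewnerLE Q 1)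
    (φ : EuclideanSpace ℂ (Fin n)) (hφ : ‖φ‖ = 1)
    (h : lam0 - δ ≤ (inner ℂ φ (Matrix.toEuclideanLin (Q * M * Q) φ) : ℂ).re) :
    (Δ - δ) / Δ ≤ ‖(inner ℂ Ψ (Matrix.toEuclideanLin Q φ) : ℂ)‖ ^ 2 := by
  set x : Fin n → ℂ := WithLp.equiv 2 _ φ with hx
  set y : Fin n → ℂ := WithLp.equiv 2 _ Ψ with hy
  set ψ : Fin n → ℂ := Q *ᵥ x with hψdef
  set c : ℂ := dotProduct (star y) ψ with hc
  set t : ℝ := ‖c‖ ^ 2 with ht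
  -- identify the inner products
  have e1 : (inner ℂ Ψ (Matrix.toEuclideanLin Q φ) : ℂ) = c := by
    rw [EuclideanSpace.inner_eq_star_dotProduct, dotProduct_comm]; rfl
  have e2 : (inner ℂ φ (Matrix.toEuclideanLin (Q * M * Q) φ) : ℂ)
      = dotProduct (star x) ((Q * M * Q) *ᵥ x) := by
    rw [EuclideanSpace.inner_eq_star_dotProduct, dotProduct_comm]; rfl
  have hsψ : star ψ = star x ᵥ* Q := by
    rw [hψdef, star_mulVec, hQ.eq]
  have hm' : dotProduct (star x) ((Q * M * Q) *ᵥ x)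
      = dotProduct (star ψ) (M *ᵥ ψ) := by
    rw [hsψ, hψdef]
    simp [dotProduct_mulVec, Matrix.vecMul_vecMul, Matrix.mul_assoc]
  -- ⟨ψ, P ψ⟩ = conj c * c
  have hPψ : dotProduct (star ψ) (P *ᵥ ψ) = (starRingEnd ℂ) c * c := by
    have hPv : P *ᵥ ψ = fun i => y i * c := by
      funext i
      subst hP
      simp only [Matrix.mulVec, dotProduct, Matrix.of_apply, hc, Finset.mul_sum]
      refine Finset.sum_congr rfl fun j _ => ?_
      have hyj : y j = Ψ j := rfl
      have hyi : y i = Ψ i := rfl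
      simp only [Pi.star_apply, Complex.star_def, hyj, hyi]
      ring
    rw [hPv]
    have h1 : dotProduct (star ψ) (fun i => y i * c)
        = dotProduct (star ψ) y * c := by
      simp [dotProduct, Finset.sum_mul, mul_assoc]
    rw [h1]
    congr 1
    rw [hc]
    simp [dotProduct, map_sum, mul_comm]
  have hccre : ((starRingEnd ℂ) c * c).re = t := by
    rw [ht, mul_comm, Complex.mul_conj, Complex.sq_norm]
    simp
  -- norms
  have hφ1 : dotProduct (star x) x = 1 := by
    have h2 : (inner ℂ φ φ : ℂ) = 1 := by
      rw [inner_self_eq_norm_sq_to_K, hφ]; norm_num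
    rw [EuclideanSpace.inner_eq_star_dotProduct, dotProduct_comm] at h2
    exact h2
  -- Q is PSD, 1-Q is PSD
  have hQpsd : Q.PosSemidef := by simpa [Matrix.loewnerLE] using hQ0
  have hRpsd : (1 - Q).PosSemidef := hQ1
  -- ‖ψ‖² ≤ 1
  have hsle : (dotProduct (star ψ) ψ).re ≤ 1 := by
    have hsψ2 : dotProduct (star ψ) ψ = dotProduct (star x) ((Q * Q) *ᵥ x) := by
      rw [hsψ, hψdef]
      simp [dotProduct_mulVec, Matrix.vecMul_vecMul]
    have hRc : (1 - Q)ᴴ = 1 - Q := by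
      simp [conjTranspose_sub, hQ.eq]
    have hd : Q - Q * Q = (1 - Q)ᴴ * Q * (1 - Q) + Qᴴ * (1 - Q) * Q := by
      rw [hRc, hQ.eq]; noncomm_ring
    have hQQ : (Q - Q * Q).PosSemidef := by
      rw [hd]
      exact (hQpsd.conjTranspose_mul_mul_same _).add (hRpsd.conjTranspose_mul_mul_same _)
    have h1 := hQQ.re_dotProduct_nonneg x
    have h2 := hRpsd.re_dotProduct_nonneg x
    rw [hsψ2]
    have e3 : dotProduct (star x) ((Q - Q * Q) *ᵥ x)
        = dotProduct (star x) (Q *ᵥ x) - dotProduct (star x) ((Q * Q) *ᵥ x) := by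
      simp [Matrix.sub_mulVec, dotProduct_sub]
    have e4 : dotProduct (star x) ((1 - Q) *ᵥ x)
        = 1 - dotProduct (star x) (Q *ᵥ x) := by
      simp [Matrix.sub_mulVec, dotProduct_sub, hφ1]
    rw [e3] at h1
    rw [e4] at h2
    simp only [RCLike.re_to_complex, Complex.sub_re, Complex.one_re] at h1 h2
    linarith
  -- the main PSD inequality
  have hmain := hMle.re_dotProduct_nonneg ψ
  have expand : dotProduct (star ψ)
        ((((lam0 : ℂ) • P + ((lam0 : ℂ) - (Δ : ℂ)) • (1 - P)) - M) *ᵥ ψ)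
      = (lam0 : ℂ) * ((starRingEnd ℂ) c * c)
        + ((lam0 : ℂ) - (Δ : ℂ)) * (dotProduct (star ψ) ψ - (starRingEnd ℂ) c * c)
        - dotProduct (star ψ) (M *ᵥ ψ) := by
    rw [Matrix.sub_mulVec, Matrix.add_mulVec, Matrix.smul_mulVec,
      Matrix.smul_mulVec, Matrix.sub_mulVec, Matrix.one_mulVec]
    simp [dotProduct_sub, dotProduct_add, dotProduct_smul, hPψ,
      smul_eq_mul, dotProduct_sub]
  rw [expand] at hmain
  -- pass to real parts
  have him : ((starRingEnd ℂ) c * c).im = 0 := by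
    rw [mul_comm, Complex.mul_conj]; simp
  set s : ℝ := (dotProduct (star ψ) ψ).re with hs
  set m : ℝ := (dotProduct (star ψ) (M *ᵥ ψ)).re with hmr
  have hmain' : 0 ≤ lam0 * t + (lam0 - Δ) * (s - t) - m := by
    have : ((lam0 : ℂ) * ((starRingEnd ℂ) c * c)
        + ((lam0 : ℂ) - (Δ : ℂ)) * (dotProduct (star ψ) ψ - (starRingEnd ℂ) c * c)
        - dotProduct (star ψ) (M *ᵥ ψ)).re
        = lam0 * t + (lam0 - Δ) * (s - t) - m := by
      have : ((lam0 : ℂ) - (Δ : ℂ)) = ((lam0 - Δ : ℝ) : ℂ) := by push_cast; ring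
      rw [this]
      simp [Complex.sub_re, Complex.add_re, Complex.re_ofReal_mul, hccre, him,
        Complex.sub_im, Complex.sub_re, hs, hmr]
    simp only [RCLike.re_to_complex] at hmain
    rwa [this] at hmain
  have hh : lam0 - δ ≤ m := by
    rw [hmr, ← hm', ← e2]; exact h
  have htnn : 0 ≤ t := by positivity
  rw [e1, ← ht, div_le_iff₀ hΔ]
  nlinarith [hmain', hh, hsle, htnn]
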